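/- Let G be a finite simple graph, let R and S be disjoint subsets of V(G), and let T = R ∪ S. Let ρ be an R-type and σ an S-type that are compatible, and let τ be the merge type of ρ and σ. Then for every B_R ⊆ R and B_S ⊆ S, every independent set C_R ⊆ R of G[R] with |C_R ∩ B_R| ≤ 1 that is valid relative to B_R and has R-type ρ relative to B_R, and every independent set C_S ⊆ S of G[S] with |C_S ∩ B_S| ≤ 1 that is valid relative to B_S and has S-type σ relative to B_S, the set C_R ∪ C_S is an independent set of G[T], is valid relative to B_R ∪ B_S, and its T-type relative to B_R ∪ B_S is τ. -/
import Mathlib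


open scoped Classical

namespace BCol

/-- The three possible descriptions of a color class on an equivalence class:
`none`, `contains`, or `demand`. -/
inductive Desc where
  | none
  | contains
  | demand
deriving DecidableEq

variable {V : Type*}

/-- The neighborhood of `v` outside of `U`, i.e. `N_G(v) \ U`. -/
def extN (G : SimpleGraph V) (U : Set V) (v : V) : Set V := G.neighborSet v \ U

/-- The `~_U`-equivalence class of `u`: the vertices of `U` with the same
neighborhood outside of `U` as `u`. -/
def cls (G : SimpleGraph V) (U : Set V) (u : V) : Set V :=
  {v | v ∈ U ∧ extN G U v = extN G U u}

/-- The set of equivalence classes `U/~_U`. -/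
def eqClasses (G : SimpleGraph V) (U : Set V) : Set (Set V) :=
  {Q | ∃ u ∈ U, Q = cls G U u}

/-- The equivalence classes of `~_U`, as a type. -/
abbrev Classes (G : SimpleGraph V) (U : Set V) := {Q // Q ∈ eqClasses G U}

/-- A `U`-type: a pair of a map `U/~_U → {none, contains, demand}` and a bit. -/
abbrev UType (G : SimpleGraph V) (U : Set V) := (Classes G U → Desc) × Bool

/-- The neighborhood of `v` in the induced subgraph `G[U]`. -/
def indN (G : SimpleGraph V) (U : Set V) (v : V) : Set V := G.neighborSet v ∩ U

/-- `C` is an independent set of the induced subgraph `G[U]`. -/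
def IndepIn (G : SimpleGraph V) (U C : Set V) : Prop :=
  C ⊆ U ∧ ∀ u ∈ C, ∀ v ∈ C, ¬ G.Adj u v

/-- The `desc`-component of the `U`-type of the color class `C` relative to the set `B`
of partial `b`-vertices. -/
noncomputable def descOf (G : SimpleGraph V) (U B C : Set V) (Q : Classes G U) : Desc :=
  if (Q.1 ∩ C).Nonempty then Desc.contains
  else if ∃ v ∈ B ∩ Q.1, indN G U v ∩ C = ∅ then Desc.demand
  else Desc.none

/-- The `U`-type of the color class `C` relative to the set `B` of partial `b`-vertices. -/
noncomputable def typeOf (G : SimpleGraph V) (U B C : Set V) : UType G U :=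
  (descOf G U B C, if (C ∩ B).Nonempty then true else false)

/-- `C` is valid relative to `B`: there is no class `Q ∈ U/~_U` intersecting `C` such
that some `v ∈ B ∩ Q` has closed neighborhood in `G[U]` disjoint from `C`. -/
def ValidClass (G : SimpleGraph V) (U B C : Set V) : Prop :=
  ¬ ∃ Q ∈ eqClasses G U, (Q ∩ C).Nonempty ∧
      ∃ v ∈ B ∩ Q, (insert v (indN G U v)) ∩ C = ∅

/-- `Q_R Q_S ∈ E(H)`: every vertex of `Q_R` is adjacent to every vertex of `Q_S`. -/
def OpEdge (G : SimpleGraph V) (QR QS : Set V) : Prop :=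
  ∀ u ∈ QR, ∀ v ∈ QS, G.Adj u v

/-- An `R`-type `ρ` and an `S`-type `σ` are compatible. -/
def CompatibleTypes (G : SimpleGraph V) (R S : Set V)
    (ρ : UType G R) (σ : UType G S) : Prop :=
  (¬ (ρ.2 = true ∧ σ.2 = true)) ∧
  (¬ ∃ (QR : Classes G R) (QS : Classes G S),
      OpEdge G QR.1 QS.1 ∧ ρ.1 QR = Desc.contains ∧ σ.1 QS = Desc.contains) ∧
  (∀ Q : Classes G (R ∪ S),
    ((∃ QR : Classes G R, QR.1 ⊆ Q.1 ∧ ρ.1 QR = Desc.contains) ∨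
     (∃ QS : Classes G S, QS.1 ⊆ Q.1 ∧ σ.1 QS = Desc.contains)) →
    ((∀ QR : Classes G R, QR.1 ⊆ Q.1 → ρ.1 QR = Desc.demand →
        ∃ QS : Classes G S, σ.1 QS = Desc.contains ∧ OpEdge G QR.1 QS.1) ∧
     (∀ QS : Classes G S, QS.1 ⊆ Q.1 → σ.1 QS = Desc.demand →
        ∃ QR : Classes G R, ρ.1 QR = Desc.contains ∧ OpEdge G QR.1 QS.1)))

/-- The merge type of an `R`-type `ρ` and an `S`-type `σ`. -/
noncomputable def mergeType (G : SimpleGraph V) (R S : Set V)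
    (ρ : UType G R) (σ : UType G S) : UType G (R ∪ S) :=
  (fun Q =>
    if (∃ QR : Classes G R, QR.1 ⊆ Q.1 ∧ ρ.1 QR = Desc.contains) ∨
       (∃ QS : Classes G S, QS.1 ⊆ Q.1 ∧ σ.1 QS = Desc.contains) then
      Desc.contains
    else if (∃ QR : Classes G R, QR.1 ⊆ Q.1 ∧ ρ.1 QR = Desc.demand ∧
              ∀ QS : Classes G S, OpEdge G QR.1 QS.1 → σ.1 QS ≠ Desc.contains) ∨
            (∃ QS : Classes G S, QS.1 ⊆ Q.1 ∧ σ.1 QS = Desc.demand ∧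
              ∀ QR : Classes G R, OpEdge G QR.1 QS.1 → ρ.1 QR ≠ Desc.contains) then
      Desc.demand
    else Desc.none,
   ρ.2 || σ.2)

/-- `((C_1, …, C_k), B)` is a partial `b`-coloring of `G[U]` with `k` colors:
the `C_i` partition `U` into independent sets of `G[U]`, `B ⊆ U`, and each color class
contains at most one vertex of `B`. -/
def IsPartialBColoring (G : SimpleGraph V) (U : Set V) {k : ℕ}
    (C : Fin k → Set V) (B : Set V) : Prop :=
  (⋃ i, C i) = U ∧ (Pairwise fun i j => Disjoint (C i) (C j)) ∧
  (∀ i, IndepIn G U (C i)) ∧ B ⊆ U ∧ ∀ i, (C i ∩ B).Subsingleton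

/-- A valid partial `b`-coloring of `G[U]`: every color class is valid relative to `B`. -/
def IsValidPartialBColoring (G : SimpleGraph V) (U : Set V) {k : ℕ}
    (C : Fin k → Set V) (B : Set V) : Prop :=
  IsPartialBColoring G U C B ∧ ∀ i, ValidClass G U B (C i)

/-- The `U`-signature of the partial `b`-coloring `(C, B)`: to each `U`-type `τ` it
assigns the number of color classes whose `U`-type relative to `B` is `τ`. -/
noncomputable def sigOf (G : SimpleGraph V) (U : Set V) {k : ℕ}
    (C : Fin k → Set V) (B : Set V) : UType G U → ℕ :=
  fun τ => Nat.card {i : Fin k // typeOf G U B (C i) = τ}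

/-- `σ` is a `U`-signature for `k` colors: the values of `σ` sum up to `k`. -/
def IsSignature (G : SimpleGraph V) (U : Set V) (k : ℕ) (σ : UType G U → ℕ) : Prop :=
  ∑ᶠ τ, σ τ = k

/-- A triple `(σT, σR, σS)` of signatures is compatible: there is an assignment `f` of
natural numbers to the edges of the merge skeleton (i.e. to the compatible pairs of an
`R`-type and an `S`-type) such that the sums of `f` over the edges incident to each
`R`-type `ρ`, to each `S`-type `σ`, and over the edges labeled by each merge type `τ`
are `σR ρ`, `σS σ`, and `σT τ`, respectively. -/
def CompatibleSignatures (G : SimpleGraph V) (R S : Set V)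
    (σT : UType G (R ∪ S) → ℕ) (σR : UType G R → ℕ) (σS : UType G S → ℕ) : Prop :=
  ∃ f : UType G R × UType G S → ℕ,
    (∀ p, ¬ CompatibleTypes G R S p.1 p.2 → f p = 0) ∧
    (∀ ρ, ∑ᶠ σ, f (ρ, σ) = σR ρ) ∧
    (∀ σ, ∑ᶠ ρ, f (ρ, σ) = σS σ) ∧
    (∀ τ, ∑ᶠ p ∈ {p : UType G R × UType G S | mergeType G R S p.1 p.2 = τ}, f p = σT τ)

section Helpers

variable {G : SimpleGraph V} {U R S B C : Set V}

lemma mem_cls_self {u : V} (hu : u ∈ U) : u ∈ cls G U u := ⟨hu, rfl⟩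

lemma cls_eq_of_mem {u v : V} (hv : v ∈ cls G U u) : cls G U v = cls G U u := by
  ext w
  exact ⟨fun hw => ⟨hw.1, hw.2.trans hv.2⟩, fun hw => ⟨hw.1, hw.2.trans hv.2.symm⟩⟩

lemma extN_union_left (v : V) : extN G (R ∪ S) v = extN G R v \ S := by
  simp [extN, Set.diff_diff]

lemma extN_union_right (v : V) : extN G (R ∪ S) v = extN G S v \ R := by
  simp [extN, Set.diff_diff, Set.union_comm]

lemma cls_subset_cls_union_left {u : V} :
    cls G R u ⊆ cls G (R ∪ S) u := by
  rintro v ⟨hvR, he⟩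
  exact ⟨Or.inl hvR, by rw [extN_union_left, extN_union_left, he]⟩

lemma cls_subset_cls_union_right {u : V} :
    cls G S u ⊆ cls G (R ∪ S) u := by
  rintro v ⟨hvS, he⟩
  exact ⟨Or.inr hvS, by rw [extN_union_right, extN_union_right, he]⟩

lemma opEdge_of_adj (hRS : Disjoint R S) {u x : V} (hu : u ∈ R) (hx : x ∈ S)
    (hadj : G.Adj u x) : OpEdge G (cls G R u) (cls G S x) := by
  intro u' hu' x' hx'
  have hxR : x ∉ R := Set.disjoint_right.1 hRS hx
  have h2 : x ∈ extN G R u' := by rw [hu'.2]; exact ⟨hadj, hxR⟩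
  have hadj' : G.Adj u' x := h2.1
  have hu'S : u' ∉ S := Set.disjoint_left.1 hRS hu'.1
  have h4 : u' ∈ extN G S x' := by rw [hx'.2]; exact ⟨hadj'.symm, hu'S⟩
  exact h4.1.symm

lemma descOf_eq_contains_iff {Q : Classes G U} :
    descOf G U B C Q = Desc.contains ↔ (Q.1 ∩ C).Nonempty := by
  unfold descOf; split_ifs with h1 h2 <;> simp [h1]

lemma descOf_eq_demand_iff {Q : Classes G U} :
    descOf G U B C Q = Desc.demand ↔
      ¬ (Q.1 ∩ C).Nonempty ∧ ∃ v ∈ B ∩ Q.1, indN G U v ∩ C = ∅ := by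
  unfold descOf; split_ifs with h1 h2 <;> simp_all

lemma descOf_eq_none_iff {Q : Classes G U} :
    descOf G U B C Q = Desc.none ↔
      ¬ (Q.1 ∩ C).Nonempty ∧ ¬ ∃ v ∈ B ∩ Q.1, indN G U v ∩ C = ∅ := by
  unfold descOf; split_ifs with h1 h2 <;> simp_all

lemma cls_subset_of_mem_left {t v : V} (hv : v ∈ cls G (R ∪ S) t) :
    cls G R v ⊆ cls G (R ∪ S) t := by
  intro y hy
  rw [← cls_eq_of_mem hv]
  exact cls_subset_cls_union_left hy

lemma cls_subset_of_mem_right {t v : V} (hv : v ∈ cls G (R ∪ S) t) :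
    cls G S v ⊆ cls G (R ∪ S) t := by
  intro y hy
  rw [← cls_eq_of_mem hv]
  exact cls_subset_cls_union_right hy

end Helpers

/-- Merging types (Lemma: merge). Let `R, S` be disjoint vertex subsets of a finite
graph `G` and `T = R ∪ S`. If `ρ` is an `R`-type and `σ` an `S`-type which are
compatible, then for all `B_R ⊆ R`, `B_S ⊆ S`, every valid independent color class
`C_R ⊆ R` of `G[R]` of `R`-type `ρ` relative to `B_R` and every valid independent color
class `C_S ⊆ S` of `G[S]` of `S`-type `σ` relative to `B_S`, the union `C_R ∪ C_S` is
an independent set of `G[T]`, is valid relative to `B_R ∪ B_S`, and its `T`-type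
relative to `B_R ∪ B_S` is the merge type of `ρ` and `σ`. -/
theorem merge_types {V : Type*} [Fintype V] [DecidableEq V] (G : SimpleGraph V)
    (R S : Set V) (hRS : Disjoint R S)
    (ρ : UType G R) (σ : UType G S) (hcomp : CompatibleTypes G R S ρ σ)
    (BR BS CR CS : Set V) (hBR : BR ⊆ R) (hBS : BS ⊆ S)
    (hCRind : IndepIn G R CR) (hCRB : (CR ∩ BR).Subsingleton)
    (hCRvalid : ValidClass G R BR CR) (hCRtype : typeOf G R BR CR = ρ)
    (hCSind : IndepIn G S CS) (hCSB : (CS ∩ BS).Subsingleton)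
    (hCSvalid : ValidClass G S BS CS) (hCStype : typeOf G S BS CS = σ) :
    IndepIn G (R ∪ S) (CR ∪ CS) ∧
    ValidClass G (R ∪ S) (BR ∪ BS) (CR ∪ CS) ∧
    typeOf G (R ∪ S) (BR ∪ BS) (CR ∪ CS) = mergeType G R S ρ σ := by
  subst hCRtype hCStype
  have hCRsub : CR ⊆ R := hCRind.1
  have hCSsub : CS ⊆ S := hCSind.1
  -- no edges between CR and CS
  have hcross : ∀ u ∈ CR, ∀ v ∈ CS, ¬ G.Adj u v := by
    intro u hu v hv hadj
    exact hcomp.2.1 ⟨⟨cls G R u, ⟨u, hCRsub hu, rfl⟩⟩, ⟨cls G S v, ⟨v, hCSsub hv, rfl⟩⟩,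
      opEdge_of_adj hRS (hCRsub hu) (hCSsub hv) hadj,
      descOf_eq_contains_iff.2 ⟨u, mem_cls_self (hCRsub hu), hu⟩,
      descOf_eq_contains_iff.2 ⟨v, mem_cls_self (hCSsub hv), hv⟩⟩
  refine ⟨⟨Set.union_subset_union hCRsub hCSsub, ?_⟩, ?_, ?_⟩
  · rintro u (hu | hu) v (hv | hv) hadj
    · exact hCRind.2 u hu v hv hadj
    · exact hcross u hu v hv hadj
    · exact hcross v hv u hu hadj.symm
    · exact hCSind.2 u hu v hv hadj
  -- validity
  · rintro ⟨Q, ⟨t, htT, rfl⟩, ⟨w, hwQ, hwC⟩, v, ⟨hvB, hvQ⟩, hve⟩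
    have hveN : ∀ x, x ∈ indN G (R ∪ S) v → x ∉ CR ∪ CS := fun x hx hxC =>
      Set.eq_empty_iff_forall_notMem.1 hve x ⟨Set.mem_insert_of_mem _ hx, hxC⟩
    have hvnotC : v ∉ CR ∪ CS := fun h =>
      Set.eq_empty_iff_forall_notMem.1 hve v ⟨Set.mem_insert _ _, h⟩
    -- the "contains" hypothesis for compatibility condition (3)
    have hcontains : (∃ QR : Classes G R, QR.1 ⊆ cls G (R ∪ S) t ∧
          (typeOf G R BR CR).1 QR = Desc.contains) ∨
        (∃ QS : Classes G S, QS.1 ⊆ cls G (R ∪ S) t ∧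
          (typeOf G S BS CS).1 QS = Desc.contains) := by
      rcases hwC with hw | hw
      · exact Or.inl ⟨⟨cls G R w, ⟨w, hCRsub hw, rfl⟩⟩,
          cls_subset_of_mem_left hwQ,
          descOf_eq_contains_iff.2 ⟨w, mem_cls_self (hCRsub hw), hw⟩⟩
      · exact Or.inr ⟨⟨cls G S w, ⟨w, hCSsub hw, rfl⟩⟩,
          cls_subset_of_mem_right hwQ,
          descOf_eq_contains_iff.2 ⟨w, mem_cls_self (hCSsub hw), hw⟩⟩
    obtain ⟨h1, h2⟩ := hcomp.2.2 ⟨cls G (R ∪ S) t, ⟨t, htT, rfl⟩⟩ hcontains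
    rcases hvB with hvBR | hvBS
    · -- v ∈ BR
      have hvR : v ∈ R := hBR hvBR
      have hclosedR : insert v (indN G R v) ∩ CR = ∅ := by
        apply Set.eq_empty_iff_forall_notMem.2
        rintro x ⟨hx, hxC⟩
        rcases hx with rfl | hx
        · exact hvnotC (Or.inl hxC)
        · exact hveN x ⟨hx.1, Or.inl (hx.2 : x ∈ R)⟩ (Or.inl hxC)
      have hnotcont : ¬ (cls G R v ∩ CR).Nonempty := fun hne =>
        hCRvalid ⟨cls G R v, ⟨v, hvR, rfl⟩, hne, v, ⟨hvBR, mem_cls_self hvR⟩, hclosedR⟩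
      have hdem : (typeOf G R BR CR).1 ⟨cls G R v, ⟨v, hvR, rfl⟩⟩ = Desc.demand := by
        refine descOf_eq_demand_iff.2 ⟨hnotcont, v, ⟨hvBR, mem_cls_self hvR⟩, ?_⟩
        apply Set.eq_empty_iff_forall_notMem.2
        rintro x ⟨hx, hxC⟩
        exact hveN x ⟨hx.1, Or.inl (hx.2 : x ∈ R)⟩ (Or.inl hxC)
      obtain ⟨QS, hQScont, hop⟩ := h1 ⟨cls G R v, ⟨v, hvR, rfl⟩⟩
        (cls_subset_of_mem_left hvQ) hdem
      obtain ⟨x, hxQS, hxCS⟩ := descOf_eq_contains_iff.1 hQScont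
      have hadj : G.Adj v x := hop v (mem_cls_self hvR) x hxQS
      exact hveN x ⟨hadj, Or.inr (hCSsub hxCS)⟩ (Or.inr hxCS)
    · -- v ∈ BS
      have hvS : v ∈ S := hBS hvBS
      have hclosedS : insert v (indN G S v) ∩ CS = ∅ := by
        apply Set.eq_empty_iff_forall_notMem.2
        rintro x ⟨hx, hxC⟩
        rcases hx with rfl | hx
        · exact hvnotC (Or.inr hxC)
        · exact hveN x ⟨hx.1, Or.inr (hx.2 : x ∈ S)⟩ (Or.inr hxC)
      have hnotcont : ¬ (cls G S v ∩ CS).Nonempty := fun hne =>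
        hCSvalid ⟨cls G S v, ⟨v, hvS, rfl⟩, hne, v, ⟨hvBS, mem_cls_self hvS⟩, hclosedS⟩
      have hdem : (typeOf G S BS CS).1 ⟨cls G S v, ⟨v, hvS, rfl⟩⟩ = Desc.demand := by
        refine descOf_eq_demand_iff.2 ⟨hnotcont, v, ⟨hvBS, mem_cls_self hvS⟩, ?_⟩
        apply Set.eq_empty_iff_forall_notMem.2
        rintro x ⟨hx, hxC⟩
        exact hveN x ⟨hx.1, Or.inr (hx.2 : x ∈ S)⟩ (Or.inr hxC)
      obtain ⟨QR, hQRcont, hop⟩ := h2 ⟨cls G S v, ⟨v, hvS, rfl⟩⟩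
        (cls_subset_of_mem_right hvQ) hdem
      obtain ⟨x, hxQR, hxCR⟩ := descOf_eq_contains_iff.1 hQRcont
      have hadj : G.Adj x v := hop x hxQR v (mem_cls_self hvS)
      exact hveN x ⟨hadj.symm, Or.inl (hCRsub hxCR)⟩ (Or.inl hxCR)
  -- the type is the merge type
  · refine Prod.ext ?_ ?_
    · funext Q
      obtain ⟨Qs, hQmem⟩ := Q
      obtain ⟨t, htT, rfl⟩ := hQmem
      have hA : (cls G (R ∪ S) t ∩ (CR ∪ CS)).Nonempty ↔
          (∃ QR : Classes G R, QR.1 ⊆ cls G (R ∪ S) t ∧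
              descOf G R BR CR QR = Desc.contains) ∨
          (∃ QS : Classes G S, QS.1 ⊆ cls G (R ∪ S) t ∧
              descOf G S BS CS QS = Desc.contains) := by
        constructor
        · rintro ⟨x, hxQ, hx | hx⟩
          · exact Or.inl ⟨⟨cls G R x, ⟨x, hCRsub hx, rfl⟩⟩,
              cls_subset_of_mem_left hxQ,
              descOf_eq_contains_iff.2 ⟨x, mem_cls_self (hCRsub hx), hx⟩⟩
          · exact Or.inr ⟨⟨cls G S x, ⟨x, hCSsub hx, rfl⟩⟩,
              cls_subset_of_mem_right hxQ,
              descOf_eq_contains_iff.2 ⟨x, mem_cls_self (hCSsub hx), hx⟩⟩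
        · rintro (⟨QR, hsub, hcont⟩ | ⟨QS, hsub, hcont⟩)
          · obtain ⟨x, hxQ, hxC⟩ := descOf_eq_contains_iff.1 hcont
            exact ⟨x, hsub hxQ, Or.inl hxC⟩
          · obtain ⟨x, hxQ, hxC⟩ := descOf_eq_contains_iff.1 hcont
            exact ⟨x, hsub hxQ, Or.inr hxC⟩
      simp only [mergeType]
      split_ifs with hca hcd
      · exact descOf_eq_contains_iff.2 (hA.2 hca)
      · -- demand case
        have hne : ¬ (cls G (R ∪ S) t ∩ (CR ∪ CS)).Nonempty := fun h => hca (hA.1 h)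
        refine descOf_eq_demand_iff.2 ⟨hne, ?_⟩
        rcases hcd with ⟨QR, hsub, hdem, hall⟩ | ⟨QS, hsub, hdem, hall⟩
        · obtain ⟨hne', v, ⟨hvBR, hvQR⟩, hveR⟩ := descOf_eq_demand_iff.1 hdem
          have hvR : v ∈ R := hBR hvBR
          have hQRv : QR.1 = cls G R v := by
            obtain ⟨u0, hu0, hQReq⟩ := QR.2
            rw [hQReq]
            exact (cls_eq_of_mem (show v ∈ cls G R u0 from hQReq ▸ hvQR)).symm
          refine ⟨v, ⟨Or.inl hvBR, hsub hvQR⟩, ?_⟩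
          apply Set.eq_empty_iff_forall_notMem.2
          rintro x ⟨hx, hxCR | hxCS⟩
          · exact Set.eq_empty_iff_forall_notMem.1 hveR x
              ⟨⟨hx.1, hCRsub hxCR⟩, hxCR⟩
          · have hadj : G.Adj v x := hx.1
            have hop : OpEdge G QR.1 (cls G S x) := by
              rw [hQRv]; exact opEdge_of_adj hRS hvR (hCSsub hxCS) hadj
            exact hall ⟨cls G S x, ⟨x, hCSsub hxCS, rfl⟩⟩ hop
              (descOf_eq_contains_iff.2 ⟨x, mem_cls_self (hCSsub hxCS), hxCS⟩)
        · obtain ⟨hne', v, ⟨hvBS, hvQS⟩, hveS⟩ := descOf_eq_demand_iff.1 hdem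
          have hvS : v ∈ S := hBS hvBS
          have hQSv : QS.1 = cls G S v := by
            obtain ⟨u0, hu0, hQSeq⟩ := QS.2
            rw [hQSeq]
            exact (cls_eq_of_mem (show v ∈ cls G S u0 from hQSeq ▸ hvQS)).symm
          refine ⟨v, ⟨Or.inr hvBS, hsub hvQS⟩, ?_⟩
          apply Set.eq_empty_iff_forall_notMem.2
          rintro x ⟨hx, hxCR | hxCS⟩
          · have hadj : G.Adj v x := hx.1
            have hop : OpEdge G (cls G R x) QS.1 := by
              rw [hQSv]; exact opEdge_of_adj hRS (hCRsub hxCR) hvS hadj.symm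
            exact hall ⟨cls G R x, ⟨x, hCRsub hxCR, rfl⟩⟩ hop
              (descOf_eq_contains_iff.2 ⟨x, mem_cls_self (hCRsub hxCR), hxCR⟩)
          · exact Set.eq_empty_iff_forall_notMem.1 hveS x
              ⟨⟨hx.1, hCSsub hxCS⟩, hxCS⟩
      · -- none case
        have hne : ¬ (cls G (R ∪ S) t ∩ (CR ∪ CS)).Nonempty := fun h => hca (hA.1 h)
        refine descOf_eq_none_iff.2 ⟨hne, ?_⟩
        rintro ⟨v, ⟨hvB | hvB, hvQ⟩, hve⟩
        · have hvR : v ∈ R := hBR hvB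
          have hsub : cls G R v ⊆ cls G (R ∪ S) t := cls_subset_of_mem_left hvQ
          refine hcd (Or.inl ⟨⟨cls G R v, ⟨v, hvR, rfl⟩⟩, hsub, descOf_eq_demand_iff.2
            ⟨fun ⟨x, hx1, hx2⟩ => hne ⟨x, hsub hx1, Or.inl hx2⟩,
             v, ⟨hvB, mem_cls_self hvR⟩, ?_⟩, ?_⟩)
          · apply Set.eq_empty_iff_forall_notMem.2
            rintro x ⟨hx, hxC⟩
            exact Set.eq_empty_iff_forall_notMem.1 hve x
              ⟨⟨hx.1, Or.inl (hx.2 : x ∈ R)⟩, Or.inl hxC⟩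
          · intro QS hop hcont
            obtain ⟨x, hxQS, hxCS⟩ := descOf_eq_contains_iff.1 hcont
            have hadj : G.Adj v x := hop v (mem_cls_self hvR) x hxQS
            exact Set.eq_empty_iff_forall_notMem.1 hve x
              ⟨⟨hadj, Or.inr (hCSsub hxCS)⟩, Or.inr hxCS⟩
        · have hvS : v ∈ S := hBS hvB
          have hsub : cls G S v ⊆ cls G (R ∪ S) t := cls_subset_of_mem_right hvQ
          refine hcd (Or.inr ⟨⟨cls G S v, ⟨v, hvS, rfl⟩⟩, hsub, descOf_eq_demand_iff.2
            ⟨fun ⟨x, hx1, hx2⟩ => hne ⟨x, hsub hx1, Or.inr hx2⟩,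
             v, ⟨hvB, mem_cls_self hvS⟩, ?_⟩, ?_⟩)
          · apply Set.eq_empty_iff_forall_notMem.2
            rintro x ⟨hx, hxC⟩
            exact Set.eq_empty_iff_forall_notMem.1 hve x
              ⟨⟨hx.1, Or.inr (hx.2 : x ∈ S)⟩, Or.inr hxC⟩
          · intro QR hop hcont
            obtain ⟨x, hxQR, hxCR⟩ := descOf_eq_contains_iff.1 hcont
            have hadj : G.Adj x v := hop x hxQR v (mem_cls_self hvS)
            exact Set.eq_empty_iff_forall_notMem.1 hve x
              ⟨⟨hadj.symm, Or.inl (hCRsub hxCR)⟩, Or.inl hxCR⟩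
    · have hbiff : ((CR ∪ CS) ∩ (BR ∪ BS)).Nonempty ↔
          (CR ∩ BR).Nonempty ∨ (CS ∩ BS).Nonempty := by
        constructor
        · rintro ⟨x, hx | hx, hb | hb⟩
          · exact Or.inl ⟨x, hx, hb⟩
          · exact absurd (hBS hb) (Set.disjoint_left.1 hRS (hCRsub hx))
          · exact absurd (hBR hb) (Set.disjoint_left.1 hRS.symm (hCSsub hx))
          · exact Or.inr ⟨x, hx, hb⟩
        · rintro (⟨x, h1, h2⟩ | ⟨x, h1, h2⟩)
          · exact ⟨x, Or.inl h1, Or.inl h2⟩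
          · exact ⟨x, Or.inr h1, Or.inr h2⟩
      simp only [typeOf, mergeType]
      by_cases h1 : (CR ∩ BR).Nonempty <;> by_cases h2 : (CS ∩ BS).Nonempty <;>
        simp [h1, h2, hbiff]

end BCol
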